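/- Let k and r be positive integers with r < k and let p = (p_1,…,p_k) be a tuple of non-negative integers with S_{p,r} non-empty. Let (S,f) be uniformly distributed on Ω. Then the probability that G_β(S,f) is a tree equals Pdet(M_β), where M_β = (M_{β,i,j})_{i,j∈[k]} is the matrix of events with M_{β,i,j} = J^{f(i)}_{i,j+1} for i∈[k−1] (the index j+1 taken cyclically modulo k), and M_{β,k,j} = Ω for all j∈[k]. -/
import Mathlib


open Finset

/-- The cyclic interval `]i,j]` of `[k] = {1,…,k}`, realized inside `ZMod k`
(the element `k` of `[k]` is represented by `0 : ZMod k`). -/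
def cyc (k : ℕ) [NeZero k] (i j : ZMod k) : Finset (ZMod k) :=
  Finset.univ.filter fun x => 1 ≤ (x - i).val ∧ (x - i).val ≤ (j - i).val

/-- Membership in `𝒮_{p,r}` : each `j ∈ [k]` belongs to exactly `p j` of the sets `S_1,…,S_r`. -/
def SprMem (k r : ℕ) [NeZero k] (p : ZMod k → ℕ) (S : Fin r → Finset (ZMod k)) : Prop :=
  ∀ j : ZMod k, Nat.card {i : Fin r // j ∈ S i} = p j

/-- Membership in `ℳ_{p,r}` : member of `𝒮_{p,r}` all of whose sets are proper subsets of `[k]`. -/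
def MprMem (k r : ℕ) [NeZero k] (p : ZMod k → ℕ) (S : Fin r → Finset (ZMod k)) : Prop :=
  SprMem k r p S ∧ ∀ i, S i ≠ Finset.univ

/-- `|ℳ_{p,r}|`. -/
noncomputable def Mcard (k r : ℕ) [NeZero k] (p : ZMod k → ℕ) : ℕ :=
  Nat.card {S : Fin r → Finset (ZMod k) // MprMem k r p S}

/-- `|𝒮_{p,r}|`. -/
noncomputable def Scard (k r : ℕ) [NeZero k] (p : ZMod k → ℕ) : ℕ :=
  Nat.card {S : Fin r → Finset (ZMod k) // SprMem k r p S}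

/-- `|ℳ_{q,r}|` for an integer-valued tuple `q` (empty if some entry of `q` is negative). -/
noncomputable def McardZ (k r : ℕ) [NeZero k] (q : ZMod k → ℤ) : ℕ :=
  Nat.card {S : Fin r → Finset (ZMod k) //
    (∀ j : ZMod k, (Nat.card {i : Fin r // j ∈ S i} : ℤ) = q j) ∧ ∀ i, S i ≠ Finset.univ}

/-- `alphaRel k S i j` holds iff `j = α(i,S)`. -/
def alphaRel (k : ℕ) [NeZero k] (S : Finset (ZMod k)) (i j : ZMod k) : Prop :=
  if S = Finset.univ then j = i else j ∉ S ∧ cyc k i (j - 1) ⊆ S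

/-- `betaRel k S i j` holds iff `j = β(i,S)`. -/
def betaRel (k : ℕ) [NeZero k] (S : Finset (ZMod k)) (i j : ZMod k) : Prop :=
  if S = Finset.univ then j = i else j + 1 ∉ S ∧ cyc k i j ⊆ S

/-- `gammaRel k S i j` holds iff `j = γ(i,S)`. -/
def gammaRel (k : ℕ) [NeZero k] (S : Finset (ZMod k)) (i j : ZMod k) : Prop :=
  if S = Finset.univ then j = i
  else if i ∈ S then j = i - 1
  else j + 1 ∉ S ∧ cyc k i j ⊆ S

/-- The digraph on `[k]` with the `k-1` arcs `(i, ζ(i, S_{f i}))` for `i ∈ [k-1]`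
(the nonzero elements of `ZMod k`) is a tree, i.e. a spanning tree oriented toward
the root `k` (represented by `0`): following the arcs from any vertex reaches the root. -/
def GIsTree (k r : ℕ) [NeZero k] (zeta : Finset (ZMod k) → ZMod k → ZMod k → Prop)
    (S : Fin r → Finset (ZMod k)) (f : {i : ZMod k // i ≠ 0} → Fin r) : Prop :=
  ∃ g : ZMod k → ZMod k, g 0 = 0 ∧
    (∀ i : {i : ZMod k // i ≠ 0}, zeta (S (f i)) i.1 (g i.1)) ∧
    ∀ x : ZMod k, ∃ n : ℕ, g^[n] x = 0

/-- Sample space: pairs of a tuple `S ∈ ℳ_{p,r}` and a surjection `f : [k-1] → [r]`,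
with the uniform probability measure. -/
abbrev OmM (k r : ℕ) [NeZero k] (p : ZMod k → ℕ) : Type :=
  {om : (Fin r → Finset (ZMod k)) × ({i : ZMod k // i ≠ 0} → Fin r) //
    MprMem k r p om.1 ∧ Function.Surjective om.2}

/-- Sample space `Ω`: pairs of a tuple `S ∈ 𝒮_{p,r}` and a surjection `f : [k-1] → [r]`,
with the uniform probability measure. -/
abbrev OmS (k r : ℕ) [NeZero k] (p : ZMod k → ℕ) : Type :=
  {om : (Fin r → Finset (ZMod k)) × ({i : ZMod k // i ≠ 0} → Fin r) //
    SprMem k r p om.1 ∧ Function.Surjective om.2}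

/-- Uniform probability of an event `A` in a (finite) sample space `Om`. -/
noncomputable def PrU {Om : Type} (A : Set Om) : ℚ :=
  (Nat.card A : ℚ) / (Nat.card Om : ℚ)

/-- The `Pr`-determinant of a `k × k` matrix of events (rows and columns indexed by
`[k]`, i.e. by `ZMod k`). -/
noncomputable def Pdet {k : ℕ} [NeZero k] {Om : Type} (E : ZMod k → ZMod k → Set Om) : ℚ :=
  ∑ pi : Equiv.Perm (ZMod k), ((Equiv.Perm.sign pi : ℤ) : ℚ) * PrU (⋂ i : ZMod k, E i (pi i))

/-- The matrix of events `M_α`: `M_{α,i,j} = I^{f(i)}_{i,j}` for `i ∈ [k-1]`, and the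
row of `i = k` (i.e. `0`) is constant equal to `Ω`. -/
def Malpha (k r : ℕ) [NeZero k] (p : ZMod k → ℕ) (i j : ZMod k) : Set (OmS k r p) :=
  {om : OmS k r p | ∀ hi : i ≠ 0, cyc k i j ⊆ om.1.1 (om.1.2 ⟨i, hi⟩)}

/-- The matrix of events `M_β`: `M_{β,i,j} = J^{f(i)}_{i,j+1}` for `i ∈ [k-1]`, and the
row of `i = k` (i.e. `0`) is constant equal to `Ω`. -/
def Mbeta (k r : ℕ) [NeZero k] (p : ZMod k → ℕ) (i j : ZMod k) : Set (OmS k r p) :=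
  {om : OmS k r p | ∀ hi : i ≠ 0,
    if i = j + 1 then om.1.1 (om.1.2 ⟨i, hi⟩) = Finset.univ
    else cyc k i (j + 1) ⊆ om.1.1 (om.1.2 ⟨i, hi⟩)}

/-- Membership of `om` in the event `J^{f(i)}_{a,b}`. -/
def Jmem (k r : ℕ) [NeZero k] (p : ZMod k → ℕ) (om : OmS k r p)
    (i : {i : ZMod k // i ≠ 0}) (a b : ZMod k) : Prop :=
  if a = b then om.1.1 (om.1.2 i) = Finset.univ else cyc k a b ⊆ om.1.1 (om.1.2 i)

section aux
variable {k : ℕ} [NeZero k]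

lemma zval_sub (a b : ZMod k) :
    (a - b).val = if b.val ≤ a.val then a.val - b.val else a.val + k - b.val := by
  have hk : 0 < k := Nat.pos_of_ne_zero (NeZero.ne k)
  have ha := ZMod.val_lt a
  have hb := ZMod.val_lt b
  rw [sub_eq_add_neg, ZMod.val_add, ZMod.neg_val]
  by_cases h0 : b = 0
  · subst h0
    simp [Nat.mod_eq_of_lt ha, ZMod.val_zero]
  · rw [if_neg h0]
    rcases le_or_gt b.val a.val with h | h
    · rw [if_pos h]
      have : a.val + (k - b.val) = (a.val - b.val) + k := by omega
      rw [this, Nat.add_mod_right, Nat.mod_eq_of_lt (by omega)]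
    · rw [if_neg (by omega)]
      have hbv : 0 < b.val := by
        rcases Nat.eq_zero_or_pos b.val with h' | h'
        · exact absurd ((ZMod.val_eq_zero b).mp h') h0
        · exact h'
      rw [Nat.mod_eq_of_lt (by omega)]
      omega

lemma zval_add_one (hk : 1 < k) (x : ZMod k) :
    (x + 1).val = if x.val = k - 1 then 0 else x.val + 1 := by
  have hx := ZMod.val_lt x
  haveI : Fact (1 < k) := ⟨hk⟩
  rw [ZMod.val_add, ZMod.val_one]
  rcases eq_or_ne x.val (k - 1) with h | h
  · rw [if_pos h, h]
    have : k - 1 + 1 = k := by omega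
    rw [this, Nat.mod_self]
  · rw [if_neg h, Nat.mod_eq_of_lt (by omega)]

lemma mem_cyc {i j x : ZMod k} :
    x ∈ cyc k i j ↔ 1 ≤ (x - i).val ∧ (x - i).val ≤ (j - i).val := by
  simp [cyc]

lemma zval_natCast_val (a : ZMod k) : ((a.val : ZMod k)) = a := by
  rw [ZMod.natCast_val, ZMod.cast_id]
end aux

section beta
variable {k : ℕ} [NeZero k]

lemma sub_val_add_one (hk : 1 < k) {b i : ZMod k} (h : (b - i).val < k - 1) :
    (b + 1 - i).val = (b - i).val + 1 := by
  have : b + 1 - i = (b - i) + 1 := by ring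
  rw [this, zval_add_one hk, if_neg (by omega)]

lemma beta_unique (hk : 1 < k) {T : Finset (ZMod k)} {i b b' : ZMod k}
    (hb : b + 1 ∉ T ∧ cyc k i b ⊆ T) (hb' : b' + 1 ∉ T ∧ cyc k i b' ⊆ T) : b = b' := by
  have key : ∀ c c' : ZMod k, c + 1 ∉ T → cyc k i c' ⊆ T → ¬ ((c - i).val < (c' - i).val) := by
    intro c c' hc hc' hlt
    have hc'lt : (c' - i).val < k := ZMod.val_lt _
    have h1 : (c + 1 - i).val = (c - i).val + 1 := sub_val_add_one hk (by omega)
    exact hc (hc' (mem_cyc.mpr ⟨by omega, by omega⟩))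
  have h1 := key b b' hb.1 hb'.2
  have h2 := key b' b hb'.1 hb.2
  have : b - i = b' - i := ZMod.val_injective k (by omega)
  have := sub_left_injective this
  linear_combination this

lemma beta_exists (hk : 1 < k) {T : Finset (ZMod k)} (hT : T ≠ Finset.univ) (i : ZMod k) :
    ∃ b : ZMod k, b + 1 ∉ T ∧ cyc k i b ⊆ T := by
  obtain ⟨y, hy⟩ : ∃ y, y ∉ T := by
    by_contra h
    push_neg at h
    exact hT (Finset.eq_univ_iff_forall.mpr h)
  classical
  set D : Finset ℕ := (Finset.range k).filter (fun d => i + (d : ZMod k) + 1 ∉ T) with hD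
  have hyD : (y - i - 1).val ∈ D := by
    rw [hD, Finset.mem_filter, Finset.mem_range]
    refine ⟨ZMod.val_lt _, ?_⟩
    rw [zval_natCast_val]
    have : i + (y - i - 1) + 1 = y := by ring
    rwa [this]
  have hDne : D.Nonempty := ⟨_, hyD⟩
  set d := D.min' hDne with hd
  have hdD : d ∈ D := D.min'_mem hDne
  rw [hD, Finset.mem_filter, Finset.mem_range] at hdD
  refine ⟨i + (d : ZMod k), hdD.2, ?_⟩
  · intro x hx
    rw [mem_cyc] at hx
    have hbi : (i + (d : ZMod k) - i).val = d := by
      have : i + (d : ZMod k) - i = (d : ZMod k) := by ring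
      rw [this, ZMod.val_cast_of_lt hdD.1]
    rw [hbi] at hx
    by_contra hxT
    have hmem : (x - i).val - 1 ∈ D := by
      rw [hD, Finset.mem_filter, Finset.mem_range]
      constructor
      · have := ZMod.val_lt (x - i); omega
      · have : i + (((x - i).val - 1 : ℕ) : ZMod k) + 1 = x := by
          have hcast : (((x - i).val - 1 : ℕ) : ZMod k) = (((x - i).val : ℕ) : ZMod k) - 1 := by
            have h1 : ((x - i).val - 1) + 1 = (x - i).val := by omega
            have h2 := congrArg (fun n : ℕ => (n : ZMod k)) h1
            push_cast at h2
            linear_combination h2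
          rw [hcast, zval_natCast_val]
          ring
        rwa [this]
    have := D.min'_le _ hmem
    omega

end beta

section betachar
variable {k : ℕ} [NeZero k]

lemma cyc_subset_iff (hk : 1 < k) {T : Finset (ZMod k)} {i b : ZMod k}
    (hb : b + 1 ∉ T ∧ cyc k i b ⊆ T) (m : ZMod k) :
    cyc k i m ⊆ T ↔ (m - i).val ≤ (b - i).val := by
  constructor
  · intro h
    by_contra hlt
    push_neg at hlt
    have hm := ZMod.val_lt (m - i)
    have h1 : (b + 1 - i).val = (b - i).val + 1 := sub_val_add_one hk (by omega)
    exact hb.1 (h (mem_cyc.mpr ⟨by omega, by omega⟩))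
  · intro h x hx
    rw [mem_cyc] at hx
    exact hb.2 (mem_cyc.mpr ⟨hx.1, le_trans hx.2 h⟩)

end betachar

open scoped Classical in
noncomputable def Amat {k r : ℕ} [NeZero k] (S : Fin r → Finset (ZMod k))
    (f : {i : ZMod k // i ≠ 0} → Fin r) : Matrix (ZMod k) (ZMod k) ℚ :=
  Matrix.of fun i j =>
    if (∀ hi : i ≠ 0, if i = j + 1 then S (f ⟨i, hi⟩) = Finset.univ
        else cyc k i (j + 1) ⊆ S (f ⟨i, hi⟩)) then 1 else 0

section pointwise
open scoped Classical
variable {k r : ℕ} [NeZero k]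

theorem detA (hk : 1 < k) (S : Fin r → Finset (ZMod k)) (f : {i : ZMod k // i ≠ 0} → Fin r) :
    (Amat S f).det = if GIsTree k r (betaRel k) S f then 1 else 0 := by
  have hrow0 : ∀ j, Amat S f 0 j = 1 := by
    intro j
    rw [Amat, Matrix.of_apply, if_pos]
    intro hi; exact absurd rfl hi
  by_cases hU : ∀ i : {i : ZMod k // i ≠ 0}, S (f i) ≠ Finset.univ
  · -- all sets proper
    have hpick : ∀ i : {i : ZMod k // i ≠ 0}, ∃ b : ZMod k,
        b + 1 ∉ S (f i) ∧ cyc k i.1 b ⊆ S (f i) :=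
      fun i => beta_exists hk (hU i) i.1
    choose gs hgs1 hgs2 using hpick
    set g : ZMod k → ZMod k := fun x => if hx : x = 0 then 0 else gs ⟨x, hx⟩ with hgdef
    have hg0 : g 0 = 0 := by simp [hgdef]
    have hgspec : ∀ i : {i : ZMod k // i ≠ 0},
        g i.1 + 1 ∉ S (f i) ∧ cyc k i.1 (g i.1) ⊆ S (f i) := by
      intro i
      have h1 : g i.1 = gs i := by
        rw [hgdef]; simp only [dif_neg i.2]
      rw [h1]; exact ⟨hgs1 i, hgs2 i⟩
    have hgiff : GIsTree k r (betaRel k) S f ↔ ∀ x : ZMod k, ∃ n, g^[n] x = 0 := by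
      constructor
      · rintro ⟨g', hg'0, hrel, hreach⟩
        have hgg : g' = g := by
          funext x
          by_cases hx : x = 0
          · rw [hx, hg'0, hg0]
          · have h1 := hrel ⟨x, hx⟩
            rw [betaRel, if_neg (hU ⟨x, hx⟩)] at h1
            exact beta_unique hk h1 (hgspec ⟨x, hx⟩)
        rwa [hgg] at hreach
      · intro hreach
        refine ⟨g, hg0, ?_, hreach⟩
        intro i
        rw [betaRel, if_neg (hU i)]
        exact hgspec i
    have hval_pos : ∀ x : ZMod k, x ≠ 0 → 1 ≤ x.val := fun x hx =>
      Nat.one_le_iff_ne_zero.mpr (fun hzz => hx ((ZMod.val_eq_zero x).mp hzz))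
    have hrow : ∀ (i : ZMod k), i ≠ 0 → ∀ (j : ZMod k), Amat S f i j =
        (if i.val ≤ j.val then (1:ℚ) else 0) - (if (g i).val ≤ j.val then 1 else 0)
          + (if (g i).val < i.val then 1 else 0) := by
      intro i hi j
      have hspec := hgspec ⟨i, hi⟩
      have hcond : (Amat S f) i j = if (if i = j + 1 then S (f ⟨i, hi⟩) = Finset.univ
          else cyc k i (j + 1) ⊆ S (f ⟨i, hi⟩)) then (1:ℚ) else 0 := by
        rw [Amat, Matrix.of_apply]
        congr 1
        simp only [eq_iff_iff]
        exact ⟨fun hcc => hcc hi, fun hcc _ => hcc⟩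
      have step1 : Amat S f i j = if (1 ≤ (j + 1 - i).val ∧ (j + 1 - i).val ≤ (g i - i).val)
          then (1:ℚ) else 0 := by
        rw [hcond]
        by_cases hij : i = j + 1
        · have c1 : ¬ (if i = j + 1 then S (f ⟨i, hi⟩) = Finset.univ
              else cyc k i (j + 1) ⊆ S (f ⟨i, hi⟩)) := by
            rw [if_pos hij]
            exact hU ⟨i, hi⟩
          have c2 : ¬ (1 ≤ (j + 1 - i).val ∧ (j + 1 - i).val ≤ (g i - i).val) := by
            rintro ⟨h1, -⟩
            rw [← hij, sub_self] at h1
            simp [ZMod.val_zero] at h1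
          rw [if_neg c1, if_neg c2]
        · have h1 : 1 ≤ (j + 1 - i).val := by
            apply hval_pos
            intro hzz
            exact hij (by linear_combination -hzz)
          have c2 : (if i = j + 1 then S (f ⟨i, hi⟩) = Finset.univ
              else cyc k i (j + 1) ⊆ S (f ⟨i, hi⟩)) ↔
              (1 ≤ (j + 1 - i).val ∧ (j + 1 - i).val ≤ (g i - i).val) := by
            rw [if_neg hij, cyc_subset_iff hk hspec (j+1)]
            exact ⟨fun hcc => ⟨h1, hcc⟩, fun hcc => hcc.2⟩
          simp only [c2]
      rw [step1]
      have ha := hval_pos i hi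
      have ha' := ZMod.val_lt i
      have hc' := ZMod.val_lt (g i)
      have ht' := ZMod.val_lt j
      have hj1 : (j + 1).val = if j.val = k - 1 then 0 else j.val + 1 := zval_add_one hk j
      have he : (j + 1 - i).val = if i.val ≤ (j+1).val then (j+1).val - i.val
          else (j+1).val + k - i.val := zval_sub _ _
      have hd : (g i - i).val = if i.val ≤ (g i).val then (g i).val - i.val
          else (g i).val + k - i.val := zval_sub _ _
      rw [hj1] at he
      split_ifs at he hd ⊢ <;> norm_num <;> omega
    by_cases htree : ∀ x : ZMod k, ∃ n : ℕ, g^[n] x = 0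
    · rw [if_pos (hgiff.mpr htree)]
      set h : ZMod k → ℕ := fun x => Nat.find (htree x) with hh
      have hpos1 : ∀ x : ZMod k, x ≠ 0 → 1 ≤ h x := by
        intro x hx
        rcases Nat.eq_zero_or_pos (h x) with h' | h'
        · exfalso; apply hx
          have h1 : g^[h x] x = 0 := Nat.find_spec (htree x)
          rw [h'] at h1
          simpa using h1
        · exact h'
      have hstep : ∀ x : ZMod k, x ≠ 0 → h (g x) < h x := by
        intro x hx
        have h1 : g^[h x] x = 0 := Nat.find_spec (htree x)
        have h2 := hpos1 x hx
        have h3 : g^[h x - 1] (g x) = 0 := by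
          have h5 : g^[h x - 1 + 1] x = 0 := by
            rw [(by omega : h x - 1 + 1 = h x)]
            exact h1
          rw [Function.iterate_succ_apply] at h5
          exact h5
        have h4 : h (g x) ≤ h x - 1 := Nat.find_min' (htree (g x)) h3
        omega
      have hgne : ∀ x : ZMod k, x ≠ 0 → g x ≠ x := by
        intro x hx hgx
        have h1 := hstep x hx
        rw [hgx] at h1
        exact lt_irrefl _ h1
      set W : Matrix (ZMod k) (ZMod k) ℚ :=
        Matrix.of (fun mm x => if mm.val ≤ x.val then (1:ℚ) else 0) with hW
      set B : Matrix (ZMod k) (ZMod k) ℚ :=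
        Matrix.of (fun i j => if i = 0 then (if j = 0 then (1:ℚ) else 0) else
          ((if j = i then (1:ℚ) else 0) - (if j = g i then 1 else 0)
            + (if j = 0 then (if (g i).val < i.val then (1:ℚ) else 0) else 0))) with hB
      have hW0 : ∀ x, W 0 x = 1 := by
        intro x
        rw [hW]
        simp [ZMod.val_zero]
      have hABW : Amat S f = B * W := by
        ext i j
        rw [Matrix.mul_apply]
        by_cases hi : i = 0
        · subst hi
          rw [hrow0]
          have expand : ∀ mm : ZMod k, B 0 mm * W mm j = if mm = 0 then W mm j else 0 := by
            intro mm
            rw [hB]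
            simp only [Matrix.of_apply, if_pos rfl]
            split_ifs <;> simp
          rw [Finset.sum_congr rfl (fun mm _ => expand mm), Finset.sum_ite_eq']
          simp [hW0]
        · rw [hrow i hi j]
          have expand : ∀ mm : ZMod k, B i mm * W mm j =
              ((if mm = i then W mm j else 0) - (if mm = g i then W mm j else 0))
              + (if mm = 0 then (if (g i).val < i.val then (1:ℚ) else 0) * W mm j else 0) := by
            intro mm
            rw [hB]
            simp only [Matrix.of_apply, if_neg hi]
            split_ifs <;> ring
          rw [Finset.sum_congr rfl (fun mm _ => expand mm)]
          rw [Finset.sum_add_distrib, Finset.sum_sub_distrib]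
          rw [Finset.sum_ite_eq', Finset.sum_ite_eq', Finset.sum_ite_eq']
          simp only [Finset.mem_univ, if_pos, hW0, mul_one]
          rw [hW]
          simp only [Matrix.of_apply]
      obtain ⟨eFin, heFin⟩ : ∃ e : ZMod k ≃ Fin k, ∀ a : Fin k, (e.symm a).val = a.1 := by
        refine ⟨{ toFun := fun x => ⟨x.val, ZMod.val_lt x⟩
                  invFun := fun n => ((n : ℕ) : ZMod k)
                  left_inv := fun x => by simp [zval_natCast_val]
                  right_inv := fun n => by
                    ext
                    simp [ZMod.val_cast_of_lt n.2] }, ?_⟩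
        intro a
        exact ZMod.val_cast_of_lt a.2
      have hdetW : W.det = 1 := by
        rw [← Matrix.det_reindex_self eFin W]
        rw [Matrix.det_of_upperTriangular]
        · apply Finset.prod_eq_one
          intro x _
          simp only [Matrix.reindex_apply, Matrix.submatrix_apply, hW, Matrix.of_apply]
          rw [if_pos (le_refl _)]
        · intro a b hab
          simp only [Matrix.reindex_apply, Matrix.submatrix_apply, hW, Matrix.of_apply]
          rw [if_neg]
          rw [heFin, heFin]
          have : (b : Fin k) < a := hab
          omega
      have hBT : B.BlockTriangular (fun x => if x = 0 then (0:ℤ) else -(h x)) := by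
        intro x y hlt
        simp only at hlt
        rw [hB]; simp only [Matrix.of_apply]
        by_cases hx : x = 0
        · rw [if_pos hx] at hlt
          have hy : y ≠ 0 := by
            intro hy0
            rw [if_pos hy0] at hlt
            exact absurd hlt (lt_irrefl _)
          rw [if_pos hx, if_neg hy]
        · rw [if_neg hx] at hlt
          have hy : y ≠ 0 := by
            intro hy0
            rw [if_pos hy0] at hlt
            have := hpos1 x hx
            omega
          rw [if_neg hy] at hlt
          rw [if_neg hx]
          have hyx : y ≠ x := by
            intro hzz; subst hzz; exact absurd hlt (lt_irrefl _)
          have hygx : y ≠ g x := by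
            intro hzz
            subst hzz
            have h1 := hstep x hx
            omega
          rw [if_neg hyx, if_neg hygx, if_neg hy]
          norm_num
      have hdetB : B.det = 1 := by
        rw [hBT.det]
        apply Finset.prod_eq_one
        intro a _
        have hblock : B.toSquareBlock (fun x => if x = 0 then (0:ℤ) else -(h x)) a = 1 := by
          ext x y
          rcases x with ⟨x, hxa⟩
          rcases y with ⟨y, hya⟩
          rw [Matrix.toSquareBlock_def]
          by_cases hxy : x = y
          · subst hxy
            rw [Matrix.one_apply_eq]
            rw [hB]; simp only [Matrix.of_apply]
            by_cases hx : x = 0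
            · simp [hx]
            · have hgx : x ≠ g x := fun hzz => hgne x hx hzz.symm
              simp [hx, hgx]
          · rw [Matrix.one_apply_ne (fun hzz => hxy (congrArg Subtype.val hzz))]
            rw [hB]; simp only [Matrix.of_apply]
            by_cases hx : x = 0
            · have hy0 : y ≠ 0 := by
                intro hy0
                rw [hx, hy0] at hxy
                exact hxy rfl
              simp [hx, hy0]
            · have hy0 : y ≠ 0 := by
                intro hy0
                rw [if_neg hx] at hxa
                rw [if_pos hy0] at hya
                have := hpos1 x hx
                omega
              have hyx : y ≠ x := fun hzz => hxy hzz.symm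
              have hygx : y ≠ g x := by
                intro hzz
                subst hzz
                by_cases hgx0 : g x = 0
                · exact hy0 hgx0
                · rw [if_neg hx] at hxa
                  rw [if_neg hgx0] at hya
                  have h1 := hstep x hx
                  omega
              rw [if_neg hx, if_neg hyx, if_neg hygx, if_neg hy0]
              norm_num
        rw [hblock, Matrix.det_one]
      rw [hABW, Matrix.det_mul, hdetW, hdetB]
      norm_num
    · rw [if_neg (fun ht => htree (hgiff.mp ht))]
      push_neg at htree
      obtain ⟨x₀, hx₀⟩ := htree
      have hcard : Fintype.card (ZMod k) < Fintype.card (Fin (k+1)) := by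
        simp [ZMod.card]
      obtain ⟨n₁, n₂, hne, heq⟩ :=
        Fintype.exists_ne_map_eq_of_card_lt (fun n : Fin (k+1) => g^[n.1] x₀) hcard
      have key : ∀ a b : ℕ, a < b → g^[a] x₀ = g^[b] x₀ →
          ∃ (m : ℕ) (y : ZMod k), 1 ≤ m ∧ g^[m] y = y ∧ ∀ l : ℕ, g^[l] y ≠ 0 := by
        intro a b hab habe
        refine ⟨b - a, g^[a] x₀, by omega, ?_, ?_⟩
        · rw [← Function.iterate_add_apply, (by omega : b - a + a = b)]
          exact habe.symm
        · intro l
          rw [← Function.iterate_add_apply]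
          exact hx₀ _
      obtain ⟨m, y, hm, hym, hyne⟩ : ∃ (m : ℕ) (y : ZMod k),
          1 ≤ m ∧ g^[m] y = y ∧ ∀ l : ℕ, g^[l] y ≠ 0 := by
        rcases Ne.lt_or_gt hne with hlt | hlt
        · exact key n₁.1 n₂.1 hlt heq
        · exact key n₂.1 n₁.1 hlt heq.symm
      set C : Finset (ZMod k) := (Finset.range m).image (fun l => g^[l] y) with hC
      have hyC : y ∈ C := Finset.mem_image.mpr ⟨0, Finset.mem_range.mpr (by omega), rfl⟩
      have h0C : (0 : ZMod k) ∉ C := by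
        rw [hC, Finset.mem_image]
        rintro ⟨l, -, hl⟩
        exact hyne l hl
      have hCne : ∀ z ∈ C, z ≠ 0 := fun z hz h0 => h0C (h0 ▸ hz)
      have hfixC : ∀ z ∈ C, g^[m] z = z := by
        intro z hz
        obtain ⟨l, -, rfl⟩ := Finset.mem_image.mp hz
        rw [← Function.iterate_add_apply, Nat.add_comm, Function.iterate_add_apply, hym]
      have hgC : ∀ z ∈ C, g z ∈ C := by
        intro z hz
        obtain ⟨l, hl, rfl⟩ := Finset.mem_image.mp hz
        rw [Finset.mem_range] at hl
        rcases eq_or_lt_of_le (Nat.succ_le_of_lt hl) with h1 | h1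
        · refine Finset.mem_image.mpr ⟨0, Finset.mem_range.mpr (by omega), ?_⟩
          rw [Function.iterate_zero_apply, ← Function.iterate_succ_apply' g l y, h1, hym]
        · exact Finset.mem_image.mpr ⟨l+1, Finset.mem_range.mpr h1,
            (Function.iterate_succ_apply' g l y)⟩
      have hgmC : ∀ z ∈ C, g^[m-1] z ∈ C := by
        have hiter : ∀ n, ∀ z ∈ C, g^[n] z ∈ C := by
          intro n
          induction n with
          | zero => intro z hz; exact hz
          | succ n ih =>
            intro z hz
            rw [Function.iterate_succ_apply]
            exact ih _ (hgC z hz)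
        exact hiter _
      set c : ℚ := ∑ z ∈ C, (if (g z).val < z.val then (1:ℚ) else 0) with hc
      set v : ZMod k → ℚ := fun x => if x ∈ C then 1 else if x = 0 then -c else 0 with hv
      have hvne : v ≠ 0 := by
        intro hzz
        have h1 := congrFun hzz y
        rw [hv] at h1
        simp only [if_pos hyC, Pi.zero_apply] at h1
        exact one_ne_zero h1
      have hsumW : ∀ j : ZMod k, (∑ z ∈ C, (if (g z).val ≤ j.val then (1:ℚ) else 0))
          = ∑ z ∈ C, (if z.val ≤ j.val then (1:ℚ) else 0) := by
        intro j
        apply Finset.sum_bij' (fun z _ => g z) (fun z _ => g^[m-1] z)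
        · intro z hz; exact hgC z hz
        · intro z hz; exact hgmC z hz
        · intro z hz
          have h5 : g^[m - 1 + 1] z = z := by
            rw [(by omega : m - 1 + 1 = m)]
            exact hfixC z hz
          rw [Function.iterate_succ_apply] at h5
          exact h5
        · intro z hz
          have h5 : g^[m - 1 + 1] z = z := by
            rw [(by omega : m - 1 + 1 = m)]
            exact hfixC z hz
          rw [Function.iterate_succ_apply'] at h5
          exact h5
        · intro z hz; rfl
      have hvA : Matrix.vecMul v (Amat S f) = 0 := by
        funext j
        have h1 : (Matrix.vecMul v (Amat S f)) j = ∑ x : ZMod k, v x * (Amat S f) x j := by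
          simp [Matrix.vecMul, dotProduct]
        rw [h1, Pi.zero_apply]
        have hsplit : (∑ x : ZMod k, v x * (Amat S f) x j)
            = ∑ x ∈ insert (0:ZMod k) C, v x * (Amat S f) x j := by
          symm
          apply Finset.sum_subset (Finset.subset_univ _)
          intro x _ hx
          rw [Finset.mem_insert] at hx
          push_neg at hx
          rw [hv]
          simp only [if_neg hx.2, if_neg hx.1, zero_mul]
        rw [hsplit, Finset.sum_insert h0C]
        have hv0 : v 0 = -c := by rw [hv]; simp [h0C]
        have h2 : (∑ x ∈ C, v x * (Amat S f) x j) = ∑ x ∈ C, (Amat S f) x j := by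
          apply Finset.sum_congr rfl
          intro x hx
          rw [hv]
          simp only [if_pos hx, one_mul]
        rw [hv0, hrow0 j, h2]
        rw [Finset.sum_congr rfl (fun x hx => hrow x (hCne x hx) j)]
        rw [Finset.sum_add_distrib, Finset.sum_sub_distrib, hsumW j]
        rw [sub_self, zero_add, ← hc]
        ring
      have hdet0 : (Amat S f).det = 0 :=
        Matrix.exists_vecMul_eq_zero_iff.mp ⟨v, hvne, hvA⟩
      rw [hdet0]
  · -- some S (f i₀) = univ : determinant 0, not a tree
    push_neg at hU
    obtain ⟨i₀, hi₀⟩ := hU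
    have hrow : ∀ j, Amat S f i₀.1 j = 1 := by
      intro j
      rw [Amat, Matrix.of_apply, if_pos]
      intro hi
      have : (⟨i₀.1, hi⟩ : {i : ZMod k // i ≠ 0}) = i₀ := Subtype.ext rfl
      rw [this, hi₀]
      split
      · rfl
      · exact Finset.subset_univ _
    have hdet : (Amat S f).det = 0 := by
      refine Matrix.det_zero_of_row_eq i₀.2 ?_
      funext j
      rw [hrow, hrow0]
    rw [hdet, if_neg]
    rintro ⟨g, hg0, hgrel, hreach⟩
    have hfix : g i₀.1 = i₀.1 := by
      have := hgrel i₀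
      rwa [betaRel, if_pos hi₀] at this
    have : ∀ n, g^[n] i₀.1 = i₀.1 := by
      intro n
      induction n with
      | zero => rfl
      | succ n ih => rw [Function.iterate_succ_apply', ih, hfix]
    obtain ⟨n, hn⟩ := hreach i₀.1
    exact i₀.2 (by rw [← this n, hn])

end pointwise


/-- For `(S,f)` uniform on `Ω` (pairs of a tuple in `𝒮_{p,r}` and a surjection
`[k-1] → [r]`), the probability that `G_β(S,f)` is a tree equals `Pdet(M_β)`. -/
theorem prob_tree_beta_eq_Pdet (k r : ℕ) [NeZero k] (hr : 0 < r) (hrk : r < k)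
    (p : ZMod k → ℕ)
    (hS : Nonempty {S : Fin r → Finset (ZMod k) // SprMem k r p S}) :
    (Nat.card {om : OmS k r p // GIsTree k r (betaRel k) om.1.1 om.1.2} : ℚ) /
      (Nat.card (OmS k r p) : ℚ) = Pdet (Mbeta k r p) := by
  classical
  have hk1 : 1 < k := lt_of_le_of_lt hr hrk
  haveI : Fintype (OmS k r p) := Fintype.ofFinite _
  have hcard2 : ∀ (A : Set (OmS k r p)), (Nat.card A : ℚ)
      = ∑ om : OmS k r p, (if om ∈ A then (1:ℚ) else 0) := by
    intro A
    rw [Nat.card_eq_fintype_card, Fintype.card_subtype, Finset.card_filter]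
    push_cast
    apply Finset.sum_congr rfl
    intro om _
    split_ifs <;> simp
  have hcard1 : (Nat.card {om : OmS k r p // GIsTree k r (betaRel k) om.1.1 om.1.2} : ℚ)
      = ∑ om : OmS k r p, (if GIsTree k r (betaRel k) om.1.1 om.1.2 then (1:ℚ) else 0) := by
    rw [Nat.card_eq_fintype_card, Fintype.card_subtype, Finset.card_filter]
    push_cast
    apply Finset.sum_congr rfl
    intro om _
    split_ifs <;> simp
  have hdetT : ∀ M : Matrix (ZMod k) (ZMod k) ℚ,
      (∑ σ : Equiv.Perm (ZMod k), ((Equiv.Perm.sign σ : ℤ) : ℚ) * ∏ i : ZMod k, M i (σ i))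
        = M.det := by
    intro M
    rw [← Matrix.det_transpose M, Matrix.det_apply]
    apply Finset.sum_congr rfl
    intro σ _
    simp [Matrix.transpose_apply, Units.smul_def, zsmul_eq_mul]
  have hAM : ∀ (om : OmS k r p) (pi : Equiv.Perm (ZMod k)),
      (if om ∈ ⋂ i : ZMod k, Mbeta k r p i (pi i) then (1:ℚ) else 0)
        = ∏ i : ZMod k, Amat om.1.1 om.1.2 i (pi i) := by
    intro om pi
    by_cases hmem : om ∈ ⋂ i : ZMod k, Mbeta k r p i (pi i)
    · rw [if_pos hmem]
      symm
      apply Finset.prod_eq_one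
      intro i _
      rw [Amat, Matrix.of_apply, if_pos]
      exact Set.mem_iInter.mp hmem i
    · rw [if_neg hmem]
      rw [Set.mem_iInter] at hmem
      push_neg at hmem
      obtain ⟨i, hni⟩ := hmem
      symm
      apply Finset.prod_eq_zero (Finset.mem_univ i)
      rw [Amat, Matrix.of_apply, if_neg]
      exact hni
  rw [Pdet]
  have hR : ∀ pi : Equiv.Perm (ZMod k),
      ((Equiv.Perm.sign pi : ℤ) : ℚ) * PrU (⋂ i : ZMod k, Mbeta k r p i (pi i))
      = (((Equiv.Perm.sign pi : ℤ) : ℚ) * (Nat.card (⋂ i : ZMod k, Mbeta k r p i (pi i)) : ℚ))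
          / (Nat.card (OmS k r p) : ℚ) := by
    intro pi
    rw [PrU, mul_div_assoc]
  rw [Finset.sum_congr rfl (fun pi _ => hR pi), ← Finset.sum_div]
  congr 1
  rw [hcard1]
  have hterm : ∀ pi : Equiv.Perm (ZMod k),
      ((Equiv.Perm.sign pi : ℤ) : ℚ) * (Nat.card (⋂ i : ZMod k, Mbeta k r p i (pi i)) : ℚ)
      = ∑ om : OmS k r p, ((Equiv.Perm.sign pi : ℤ) : ℚ)
          * ∏ i : ZMod k, Amat om.1.1 om.1.2 i (pi i) := by
    intro pi
    rw [hcard2, Finset.mul_sum]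
    apply Finset.sum_congr rfl
    intro om _
    congr 1
    exact hAM om pi
  rw [Finset.sum_congr rfl (fun pi _ => hterm pi), Finset.sum_comm]
  apply Finset.sum_congr rfl
  intro om _
  rw [hdetT (Amat om.1.1 om.1.2), detA hk1]
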